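/- Let A₁, …, A_m be Hermitian n×n matrices and let 1 ≤ r ≤ n. If the map β from {positive semidefinite Hermitian n×n matrices of rank at most r} to ℝ^m given by X ↦ (⟨X, A_j⟩_ℝ)_{j=1}^m is injective, then a₀ := inf { Σ_{j=1}^m ⟨x x* − y y*, A_j⟩_ℝ² / ‖x x* − y y*‖₂² : x, y ∈ ℂ^{n×r}, x x* ≠ y y* } is strictly positive. -/

import Mathlib

open Matrix Filter
open scoped ComplexOrder

noncomputable def frob {p q : ℕ} (x : Matrix (Fin p) (Fin q) ℂ) : ℝ :=
  Real.sqrt (Matrix.trace (xᴴ * x)).re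

noncomputable def rinner {p q : ℕ} (X Y : Matrix (Fin p) (Fin q) ℂ) : ℝ :=
  (Matrix.trace (Xᴴ * Y)).re

noncomputable def nuclear {p q : ℕ} (x : Matrix (Fin p) (Fin q) ℂ) : ℝ :=
  (Matrix.trace (((Matrix.posSemidef_conjTranspose_mul_self x).1.eigenvectorUnitary : Matrix (Fin q) (Fin q) ℂ) *
    diagonal (((↑) : ℝ → ℂ) ∘ Real.sqrt ∘ (Matrix.posSemidef_conjTranspose_mul_self x).1.eigenvalues) *
    star ((Matrix.posSemidef_conjTranspose_mul_self x).1.eigenvectorUnitary : Matrix (Fin q) (Fin q) ℂ))).re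

noncomputable def theta {n r : ℕ} (x : Matrix (Fin n) (Fin r) ℂ) : Matrix (Fin n) (Fin n) ℂ :=
  ((Matrix.posSemidef_self_mul_conjTranspose x).1.eigenvectorUnitary : Matrix (Fin n) (Fin n) ℂ) *
    diagonal (((↑) : ℝ → ℂ) ∘ Real.sqrt ∘ (Matrix.posSemidef_self_mul_conjTranspose x).1.eigenvalues) *
    star ((Matrix.posSemidef_self_mul_conjTranspose x).1.eigenvectorUnitary : Matrix (Fin n) (Fin n) ℂ)

noncomputable def psi {n r : ℕ} (x : Matrix (Fin n) (Fin r) ℂ) : Matrix (Fin n) (Fin n) ℂ :=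
  frob x • theta x

noncomputable def Dmet {n r : ℕ} (x y : Matrix (Fin n) (Fin r) ℂ) : ℝ :=
  ⨅ U : Matrix.unitaryGroup (Fin r) ℂ, frob (x - y * (U : Matrix (Fin r) (Fin r) ℂ))

noncomputable def dmet {n r : ℕ} (x y : Matrix (Fin n) (Fin r) ℂ) : ℝ :=
  ⨅ U : Matrix.unitaryGroup (Fin r) ℂ,
    frob (x - y * (U : Matrix (Fin r) (Fin r) ℂ)) * frob (x + y * (U : Matrix (Fin r) (Fin r) ℂ))


set_option maxHeartbeats 1000000

open Matrix
attribute [local instance] Matrix.frobeniusNormedAddCommGroup Matrix.frobeniusNormedSpace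
lemma frob_eq_norm {p q : ℕ} (x : Matrix (Fin p) (Fin q) ℂ) : frob x = ‖x‖ := by
  rw [Matrix.frobenius_norm_def, frob, Real.sqrt_eq_rpow]
  congr 1
  rw [Matrix.trace, Complex.re_sum, Finset.sum_comm]
  refine Finset.sum_congr rfl fun i _ => ?_
  simp only [Matrix.mul_apply, Matrix.conjTranspose_apply, Matrix.diag, Complex.re_sum]
  refine Finset.sum_congr rfl fun j _ => ?_
  rw [show ((2:ℝ)) = ((2:ℕ):ℝ) by norm_num, Real.rpow_natCast]
  rw [Complex.sq_norm, Complex.normSq_apply]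
  simp [Complex.mul_re]

open Matrix
lemma psd_rank_factor {n r : ℕ} (P : Matrix (Fin n) (Fin n) ℂ) (hP : P.PosSemidef)
    (hrk : P.rank ≤ r) : ∃ x : Matrix (Fin n) (Fin r) ℂ, P = x * xᴴ := by
  have hH := hP.1
  have hcard : Fintype.card {i // hH.eigenvalues i ≠ 0} ≤ Fintype.card (Fin r) := by
    rw [Fintype.card_fin, ← hH.rank_eq_card_non_zero_eigs]; exact hrk
  obtain ⟨e⟩ := Function.Embedding.nonempty_of_card_le hcard
  set eig := hH.eigenvalues with heig
  classical
  set B : Matrix (Fin n) (Fin r) ℂ := fun i j =>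
    if h : eig i ≠ 0 then (if e ⟨i, h⟩ = j then ((Real.sqrt (eig i) : ℝ) : ℂ) else 0) else 0
    with hB
  have hBB : B * Bᴴ = Matrix.diagonal (RCLike.ofReal ∘ eig) := by
    ext i i'
    simp only [Matrix.mul_apply, Matrix.conjTranspose_apply, Matrix.diagonal_apply,
      Function.comp_apply]
    by_cases h1 : eig i ≠ 0
    · by_cases h2 : eig i' ≠ 0
      · by_cases hii : i = i'
        · subst hii
          rw [if_pos rfl, Finset.sum_eq_single (e ⟨i, h1⟩)]
          · simp only [hB, dif_pos h1, if_pos rfl, if_true, RCLike.star_def, Complex.conj_ofReal]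
            rw [← Complex.ofReal_mul, Real.mul_self_sqrt (hP.eigenvalues_nonneg i)]
            rfl
          · intro b _ hb; simp [hB, dif_pos h1, Ne.symm hb]
          · simp
        · rw [if_neg hii]
          apply Finset.sum_eq_zero; intro j _
          by_cases hj1 : e ⟨i, h1⟩ = j
          · have hne : ¬ (e ⟨i', h2⟩ = j) := fun hj2 =>
              hii (congrArg Subtype.val (e.injective (hj1.trans hj2.symm)))
            simp [hB, dif_pos h2, hne]
          · simp [hB, dif_pos h1, hj1]
      · push_neg at h2
        rw [Finset.sum_eq_zero (fun j _ => by simp [hB, h2])]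
        have hii : i ≠ i' := fun h => h1 (h ▸ h2)
        simp [hii]
    · push_neg at h1
      rw [Finset.sum_eq_zero (fun j _ => by simp [hB, h1])]
      by_cases hii : i = i'
      · subst hii; simp [h1]
      · simp [hii]
  refine ⟨(hH.eigenvectorUnitary : Matrix (Fin n) (Fin n) ℂ) * B, ?_⟩
  rw [Matrix.conjTranspose_mul, Matrix.mul_assoc, ← Matrix.mul_assoc B, hBB, ← Matrix.mul_assoc]
  conv_lhs => rw [hH.spectral_theorem]
  rw [Unitary.conjStarAlgAut_apply, Matrix.star_eq_conjTranspose]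

open Matrix
open scoped ComplexOrder

lemma card_pos_le_rank {n : ℕ} (K H U : Matrix (Fin n) (Fin n) ℂ)
    (hU : U ∈ Matrix.unitaryGroup (Fin n) ℂ) (g : Fin n → ℝ)
    (hHrep : H = U * Matrix.diagonal (fun i => (g i : ℂ)) * Uᴴ)
    (hPSD : (K - H).PosSemidef) :
    Fintype.card {i // 0 < g i} ≤ K.rank := by
  classical
  set ext : ({i // 0 < g i} → ℂ) →ₗ[ℂ] (Fin n → ℂ) :=
    { toFun := fun c i => if h : 0 < g i then c ⟨i, h⟩ else 0
      map_add' := by intro a b; funext i; by_cases h : 0 < g i <;> simp [h]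
      map_smul' := by intro s a; funext i; by_cases h : 0 < g i <;> simp [h] } with hext
  set T : ({i // 0 < g i} → ℂ) →ₗ[ℂ] (Fin n → ℂ) :=
    K.mulVecLin ∘ₗ (U.mulVecLin ∘ₗ ext) with hT
  have hTinj : Function.Injective T := by
    rw [injective_iff_map_eq_zero]
    intro c hc
    by_contra hcne
    obtain ⟨i₀, hi₀⟩ := Function.ne_iff.mp hcne
    simp only [Pi.zero_apply] at hi₀
    set e : Fin n → ℂ := ext c with he
    set v : Fin n → ℂ := U *ᵥ e with hv
    have hKv : K *ᵥ v = 0 := by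
      have : T c = K *ᵥ (U *ᵥ e) := rfl
      rw [hv]; rw [← this, hc]
    have hUU : Uᴴ * U = 1 := by
      rw [← Matrix.star_eq_conjTranspose]; exact hU.1
    have hHv : star v ⬝ᵥ (H *ᵥ v) =
        ((∑ i, g i * Complex.normSq (e i) : ℝ) : ℂ) := by
      rw [hv, Matrix.star_mulVec, Matrix.mulVec_mulVec, hHrep]
      rw [Matrix.mul_assoc (U * Matrix.diagonal fun i => (g i : ℂ)), hUU, Matrix.mul_one]
      rw [← Matrix.dotProduct_mulVec, Matrix.mulVec_mulVec]
      rw [← Matrix.mul_assoc, hUU, Matrix.one_mul]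
      push_cast [dotProduct, Matrix.mulVec_diagonal, Pi.star_apply]
      refine Finset.sum_congr rfl fun i _ => ?_
      rw [Complex.normSq_eq_conj_mul_self]
      simp only [RCLike.star_def]
      ring
    have hle : star v ⬝ᵥ (H *ᵥ v) ≤ 0 := by
      have h2 := hPSD.dotProduct_mulVec_nonneg v
      rw [Matrix.sub_mulVec, dotProduct_sub, hKv, dotProduct_zero] at h2
      exact sub_nonneg.mp (by simpa using h2)
    have hpos : (0:ℝ) < ∑ i, g i * Complex.normSq (e i) := by
      apply Finset.sum_pos'
      · intro i _
        by_cases h : 0 < g i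
        · exact mul_nonneg h.le (Complex.normSq_nonneg _)
        · have : e i = 0 := by simp [he, hext, h]
          simp [this]
      · refine ⟨i₀.1, Finset.mem_univ _, ?_⟩
        have hei : e i₀.1 = c i₀ := by simp [he, hext, i₀.2]
        have : 0 < Complex.normSq (e i₀.1) := by
          rw [hei]; exact Complex.normSq_pos.mpr hi₀
        exact mul_pos i₀.2 this
    rw [hHv] at hle
    have : (0:ℂ) < ((∑ i, g i * Complex.normSq (e i) : ℝ) : ℂ) :=
      Complex.zero_lt_real.mpr hpos
    exact absurd (lt_of_lt_of_le this hle) (lt_irrefl 0)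
  have h1 : Fintype.card {i // 0 < g i} =
      Module.finrank ℂ (LinearMap.range T) := by
    rw [LinearMap.finrank_range_of_inj hTinj, Module.finrank_pi]
  have h2 : LinearMap.range T ≤ LinearMap.range K.mulVecLin :=
    LinearMap.range_comp_le_range _ _
  rw [h1, Matrix.rank]
  exact Submodule.finrank_mono h2

open Matrix
open scoped ComplexOrder

lemma unit_det {n : ℕ} (U : Matrix (Fin n) (Fin n) ℂ) (hU : U ∈ Matrix.unitaryGroup (Fin n) ℂ) :
    IsUnit U.det := by
  apply Matrix.isUnit_iff_isUnit_det _ |>.mp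
  exact ⟨Unitary.toUnits ⟨U, hU⟩, rfl⟩

lemma rank_conj_unitary {n : ℕ} (U M : Matrix (Fin n) (Fin n) ℂ)
    (hU : U ∈ Matrix.unitaryGroup (Fin n) ℂ) :
    (U * M * Uᴴ).rank = M.rank := by
  have h1 : IsUnit U.det := unit_det U hU
  have h2 : IsUnit (Uᴴ).det := by
    rw [← Matrix.star_eq_conjTranspose]
    exact unit_det (star U) (Unitary.star_mem hU)
  rw [Matrix.mul_assoc, Matrix.rank_mul_eq_right_of_isUnit_det U _ h1,
    Matrix.rank_mul_eq_left_of_isUnit_det (Uᴴ) M h2]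

lemma decomp_bounded {n r : ℕ} (x y : Matrix (Fin n) (Fin r) ℂ) :
    ∃ x' y' : Matrix (Fin n) (Fin r) ℂ,
      x' * x'ᴴ - y' * y'ᴴ = x * xᴴ - y * yᴴ ∧
      frob x' ^ 2 ≤ (n + frob (x * xᴴ - y * yᴴ) ^ 2) / 2 ∧
      frob y' ^ 2 ≤ (n + frob (x * xᴴ - y * yᴴ) ^ 2) / 2 := by
  classical
  set H : Matrix (Fin n) (Fin n) ℂ := x * xᴴ - y * yᴴ with hHdef
  have hH : H.IsHermitian :=
    ((Matrix.posSemidef_self_mul_conjTranspose x).1).sub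
      ((Matrix.posSemidef_self_mul_conjTranspose y).1)
  set eig := hH.eigenvalues with heig
  set U : Matrix (Fin n) (Fin n) ℂ := (hH.eigenvectorUnitary : Matrix (Fin n) (Fin n) ℂ)
    with hUdef
  have hU : U ∈ Matrix.unitaryGroup (Fin n) ℂ := (hH.eigenvectorUnitary).2
  have hUU : Uᴴ * U = 1 := by rw [← Matrix.star_eq_conjTranspose]; exact hU.1
  have hspec : H = U * Matrix.diagonal (fun i => ((eig i : ℝ) : ℂ)) * Uᴴ := by
    conv_lhs => rw [hH.spectral_theorem]
    rfl
  set dp : Fin n → ℝ := fun i => max (eig i) 0 with hdp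
  set dm : Fin n → ℝ := fun i => max (-eig i) 0 with hdm
  set P : Matrix (Fin n) (Fin n) ℂ := U * Matrix.diagonal (fun i => ((dp i : ℝ) : ℂ)) * Uᴴ
    with hPdef
  set Q : Matrix (Fin n) (Fin n) ℂ := U * Matrix.diagonal (fun i => ((dm i : ℝ) : ℂ)) * Uᴴ
    with hQdef
  -- P - Q = H
  have hPQ : P - Q = H := by
    rw [hPdef, hQdef, ← Matrix.sub_mul, ← Matrix.mul_sub, hspec]
    congr 2
    ext i j
    by_cases h : i = j
    · subst h
      simp [Matrix.diagonal, Matrix.sub_apply, ← Complex.ofReal_sub, hdp, hdm,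
        max_zero_sub_max_neg_zero_eq_self]
    · simp [Matrix.diagonal, Matrix.sub_apply, h]
  -- positivity
  have hPpsd : P.PosSemidef := by
    apply Matrix.PosSemidef.mul_mul_conjTranspose_same _ U
    refine Matrix.posSemidef_diagonal_iff.mpr fun i => ?_
    rw [Complex.zero_le_real]
    exact le_max_right _ _
  have hQpsd : Q.PosSemidef := by
    apply Matrix.PosSemidef.mul_mul_conjTranspose_same _ U
    refine Matrix.posSemidef_diagonal_iff.mpr fun i => ?_
    rw [Complex.zero_le_real]
    exact le_max_right _ _
  -- ranks
  have hcardP : P.rank = Fintype.card {i // 0 < eig i} := by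
    rw [hPdef, rank_conj_unitary _ _ hU, Matrix.rank_diagonal]
    apply Fintype.card_congr
    apply Equiv.subtypeEquivRight
    intro i
    show (↑(max (eig i) 0) : ℂ) ≠ 0 ↔ 0 < eig i
    rw [Ne, Complex.ofReal_eq_zero]
    constructor
    · intro h
      rcases lt_or_ge 0 (eig i) with h' | h'
      · exact h'
      · exact absurd (max_eq_right h') h
    · intro h h0
      rw [max_eq_left h.le] at h0
      exact h.ne' h0
  have hcardQ : Q.rank = Fintype.card {i // 0 < -eig i} := by
    rw [hQdef, rank_conj_unitary _ _ hU, Matrix.rank_diagonal]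
    apply Fintype.card_congr
    apply Equiv.subtypeEquivRight
    intro i
    show (↑(max (-eig i) 0) : ℂ) ≠ 0 ↔ 0 < -eig i
    rw [Ne, Complex.ofReal_eq_zero]
    constructor
    · intro h
      rcases lt_or_ge 0 (-eig i) with h' | h'
      · exact h'
      · exact absurd (max_eq_right h') h
    · intro h h0
      rw [max_eq_left h.le] at h0
      exact h.ne' h0
  have hrankx : (x * xᴴ).rank ≤ r := by
    rw [Matrix.rank_self_mul_conjTranspose]
    exact Matrix.rank_le_width x
  have hranky : (y * yᴴ).rank ≤ r := by
    rw [Matrix.rank_self_mul_conjTranspose]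
    exact Matrix.rank_le_width y
  have hrankP : P.rank ≤ r := by
    rw [hcardP]
    refine le_trans (card_pos_le_rank (x * xᴴ) H U hU eig hspec ?_) hrankx
    rw [hHdef]
    rw [sub_sub_cancel]
    exact Matrix.posSemidef_self_mul_conjTranspose y
  have hrankQ : Q.rank ≤ r := by
    rw [hcardQ]
    refine le_trans (card_pos_le_rank (y * yᴴ) (-H) U hU (fun i => -eig i) ?_ ?_) hranky
    · have hdiag : -(Matrix.diagonal fun i => ((eig i : ℝ) : ℂ)) =
          Matrix.diagonal (fun i => (((-eig i : ℝ)) : ℂ)) := by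
        ext i j
        by_cases h : i = j <;> simp [Matrix.diagonal, h]
      rw [hspec]
      beta_reduce
      rw [← Matrix.neg_mul, ← Matrix.mul_neg, hdiag]
    · rw [sub_neg_eq_add]
      have hc : y * yᴴ + H = x * xᴴ := by rw [hHdef]; abel
      rw [hc]
      exact Matrix.posSemidef_self_mul_conjTranspose x
  -- trace computations
  have key : ∀ (D E : Matrix (Fin n) (Fin n) ℂ),
      Matrix.trace ((U * D * Uᴴ) * (U * E * Uᴴ)) = Matrix.trace (D * E) := by
    intro D E
    rw [Matrix.mul_assoc (U * D) Uᴴ (U * E * Uᴴ), ← Matrix.mul_assoc Uᴴ (U * E) Uᴴ,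
      ← Matrix.mul_assoc Uᴴ U E, hUU, Matrix.one_mul,
      Matrix.trace_mul_comm, Matrix.mul_assoc E Uᴴ (U * D), ← Matrix.mul_assoc Uᴴ U D,
      hUU, Matrix.one_mul, Matrix.trace_mul_comm]
  have key1 : ∀ (D : Matrix (Fin n) (Fin n) ℂ),
      Matrix.trace (U * D * Uᴴ) = Matrix.trace D := by
    intro D
    rw [Matrix.trace_mul_comm (U * D) Uᴴ, ← Matrix.mul_assoc Uᴴ U D, hUU, Matrix.one_mul]
  have htr : Matrix.trace (Hᴴ * H) = ((∑ i, eig i ^ 2 : ℝ) : ℂ) := by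
    rw [show Hᴴ = H from hH]
    conv_lhs => rw [hspec]
    rw [key, Matrix.diagonal_mul_diagonal, Matrix.trace_diagonal]
    push_cast
    refine Finset.sum_congr rfl fun i _ => ?_
    ring
  have hfrobH : frob H ^ 2 = ∑ i, eig i ^ 2 := by
    rw [frob, htr, Complex.ofReal_re, Real.sq_sqrt (by positivity)]
  have htrP : (Matrix.trace P).re = ∑ i, dp i := by
    rw [hPdef, key1, Matrix.trace_diagonal, Complex.re_sum]
    simp
  have htrQ : (Matrix.trace Q).re = ∑ i, dm i := by
    rw [hQdef, key1, Matrix.trace_diagonal, Complex.re_sum]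
    simp
  have hdpnn : ∀ i, 0 ≤ dp i := fun i => le_max_right _ _
  have hdmnn : ∀ i, 0 ≤ dm i := fun i => le_max_right _ _
  have hbound : ∀ f : Fin n → ℝ, (∀ i, f i ≤ (1 + eig i ^ 2) / 2) →
      ∑ i, f i ≤ (n + frob H ^ 2) / 2 := by
    intro f hf
    calc ∑ i, f i ≤ ∑ i, (1 + eig i ^ 2) / 2 := Finset.sum_le_sum fun i _ => hf i
    _ = (n + frob H ^ 2) / 2 := by
        rw [hfrobH, ← Finset.sum_div, Finset.sum_add_distrib, Finset.sum_const,
          Finset.card_univ, Fintype.card_fin]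
        norm_num
  have hdple : ∀ i, dp i ≤ (1 + eig i ^ 2) / 2 := by
    intro i
    rcases le_total (eig i) 0 with h | h
    · rw [hdp]
      beta_reduce
      rw [max_eq_right h]
      nlinarith [sq_nonneg (eig i)]
    · rw [hdp]
      beta_reduce
      rw [max_eq_left h]
      nlinarith [sq_nonneg (eig i - 1)]
  have hdmle : ∀ i, dm i ≤ (1 + eig i ^ 2) / 2 := by
    intro i
    rcases le_total (-eig i) 0 with h | h
    · rw [hdm]
      beta_reduce
      rw [max_eq_right h]
      nlinarith [sq_nonneg (eig i)]
    · rw [hdm]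
      beta_reduce
      rw [max_eq_left h]
      nlinarith [sq_nonneg (eig i + 1)]
  obtain ⟨x', hx'⟩ := psd_rank_factor P hPpsd hrankP
  obtain ⟨y', hy'⟩ := psd_rank_factor Q hQpsd hrankQ
  have hfx : frob x' ^ 2 = (Matrix.trace P).re := by
    rw [frob, Matrix.trace_mul_comm, ← hx', Real.sq_sqrt]
    rw [Matrix.trace_mul_comm, ← hx'] at *
    rw [htrP]
    exact Finset.sum_nonneg fun i _ => hdpnn i
  have hfy : frob y' ^ 2 = (Matrix.trace Q).re := by
    rw [frob, Matrix.trace_mul_comm, ← hy', Real.sq_sqrt]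
    rw [htrQ]
    exact Finset.sum_nonneg fun i _ => hdmnn i
  refine ⟨x', y', ?_, ?_, ?_⟩
  · rw [← hx', ← hy', hPQ, hHdef]
  · rw [hfx, htrP]
    exact hbound dp hdple
  · rw [hfy, htrQ]
    exact hbound dm hdmle

open Matrix Filter
open scoped ComplexOrder
attribute [local instance] Matrix.frobeniusNormedAddCommGroup Matrix.frobeniusNormedSpace

lemma rinner_sub_left' {p : ℕ} (X Y Z : Matrix (Fin p) (Fin p) ℂ) :
    rinner (X - Y) Z = rinner X Z - rinner Y Z := by
  unfold rinner
  rw [Matrix.conjTranspose_sub, Matrix.sub_mul, Matrix.trace_sub, Complex.sub_re]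

lemma rinner_real_smul' {p : ℕ} (a : ℝ) (X Y : Matrix (Fin p) (Fin p) ℂ) :
    rinner (((a : ℝ) : ℂ) • X) Y = a * rinner X Y := by
  unfold rinner
  rw [Matrix.conjTranspose_smul, Matrix.smul_mul, Matrix.trace_smul]
  simp [Complex.conj_ofReal]

lemma rinner_continuous' {p : ℕ} (B : Matrix (Fin p) (Fin p) ℂ) :
    Continuous (fun X : Matrix (Fin p) (Fin p) ℂ => rinner X B) := by
  unfold rinner
  exact Complex.continuous_re.comp
    ((continuous_id.matrix_conjTranspose.matrix_mul continuous_const).matrix_trace)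


/-- if the map `X ↦ (⟨X, A_j⟩_ℝ)_j` is injective on positive semidefinite
Hermitian matrices of rank at most `r`, then the squared global lower Lipschitz constant
`a₀` of the analysis map `β` is strictly positive. -/
theorem a0_pos_of_injective (n r m : ℕ) (hr : 1 ≤ r) (hnr : r ≤ n)
    (A : Fin m → Matrix (Fin n) (Fin n) ℂ) (hA : ∀ j, (A j).IsHermitian)
    (hinj : ∀ X Y : Matrix (Fin n) (Fin n) ℂ, X.PosSemidef → Y.PosSemidef →
      X.rank ≤ r → Y.rank ≤ r →
      (∀ j, rinner X (A j) = rinner Y (A j)) → X = Y) :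
    0 < sInf {t : ℝ | ∃ x y : Matrix (Fin n) (Fin r) ℂ, x * xᴴ ≠ y * yᴴ ∧
      t = (∑ j, rinner (x * xᴴ - y * yᴴ) (A j) ^ 2) / frob (x * xᴴ - y * yᴴ) ^ 2} := by
  classical
  have hn : 1 ≤ n := le_trans hr hnr
  set fnum : Matrix (Fin n) (Fin n) ℂ → ℝ := fun Δ => ∑ j, rinner Δ (A j) ^ 2 with hfnum
  have hfc : Continuous fnum := by
    apply continuous_finset_sum
    intro j _
    exact (rinner_continuous' (A j)).pow 2
  set S : Set (Matrix (Fin n) (Fin n) ℂ) :=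
    {Δ | (∃ x y : Matrix (Fin n) (Fin r) ℂ, Δ = x * xᴴ - y * yᴴ) ∧ ‖Δ‖ = 1} with hS
  -- S is closed
  have hSclosed : IsClosed S := by
    haveI : SequentialSpace (Matrix (Fin n) (Fin n) ℂ) := inferInstanceAs (SequentialSpace (Fin n → Fin n → ℂ))
    apply IsSeqClosed.isClosed
    intro Δseq Δ hmem hlim
    have hnorm1 : ‖Δ‖ = 1 := by
      have h2 : Tendsto (fun k => ‖Δseq k‖) atTop (nhds ‖Δ‖) :=
        (continuous_norm.tendsto _).comp hlim
      have h1 : (fun k => ‖Δseq k‖) = fun _ => (1:ℝ) := funext fun k => (hmem k).2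
      rw [h1] at h2
      exact (tendsto_const_nhds_iff.mp h2).symm
    refine ⟨?_, hnorm1⟩
    choose xs ys hxy using fun k => (hmem k).1
    have hbnd : ∀ k, ∃ x' y' : Matrix (Fin n) (Fin r) ℂ,
        x' * x'ᴴ - y' * y'ᴴ = Δseq k ∧ ‖x'‖ ^ 2 ≤ (n + 1) / 2 ∧ ‖y'‖ ^ 2 ≤ (n + 1) / 2 := by
      intro k
      obtain ⟨x', y', heq, hb1, hb2⟩ := decomp_bounded (xs k) (ys k)
      rw [← hxy k] at heq hb1 hb2
      rw [frob_eq_norm (Δseq k), (hmem k).2, one_pow] at hb1 hb2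
      rw [frob_eq_norm] at hb1
      rw [frob_eq_norm] at hb2
      exact ⟨x', y', heq, hb1, hb2⟩
    choose xs' ys' heq hb1 hb2 using hbnd
    set C := Real.sqrt ((n + 1) / 2) with hC
    have hball : ∀ (u : Matrix (Fin n) (Fin r) ℂ), ‖u‖ ^ 2 ≤ (n + 1) / 2 →
        u ∈ Metric.closedBall (0 : Matrix (Fin n) (Fin r) ℂ) C := by
      intro u hu
      rw [mem_closedBall_zero_iff, ← Real.sqrt_sq (norm_nonneg u)]
      exact Real.sqrt_le_sqrt hu
    obtain ⟨xL, _, φ, hφ, hφlim⟩ :=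
      (isCompact_closedBall (0 : Matrix (Fin n) (Fin r) ℂ) C).tendsto_subseq
        (fun k => hball _ (hb1 k))
    obtain ⟨yL, _, ψ, hψ, hψlim⟩ :=
      (isCompact_closedBall (0 : Matrix (Fin n) (Fin r) ℂ) C).tendsto_subseq
        (fun k => hball _ (hb2 (φ k)))
    have hxlim : Tendsto (fun k => xs' (φ (ψ k))) atTop (nhds xL) :=
      hφlim.comp hψ.tendsto_atTop
    have hylim : Tendsto (fun k => ys' (φ (ψ k))) atTop (nhds yL) := hψlim
    have hΔlim : Tendsto (fun k => Δseq (φ (ψ k))) atTop (nhds Δ) :=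
      hlim.comp (hφ.comp hψ).tendsto_atTop
    have hG : Continuous (fun u : Matrix (Fin n) (Fin r) ℂ => u * uᴴ) :=
      continuous_id.matrix_mul continuous_id.matrix_conjTranspose
    have hFlim : Tendsto (fun k => xs' (φ (ψ k)) * (xs' (φ (ψ k)))ᴴ -
        ys' (φ (ψ k)) * (ys' (φ (ψ k)))ᴴ) atTop (nhds (xL * xLᴴ - yL * yLᴴ)) :=
      (((hG.tendsto xL).comp hxlim).sub ((hG.tendsto yL).comp hylim))
    have heq2 : (fun k => xs' (φ (ψ k)) * (xs' (φ (ψ k)))ᴴ -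
        ys' (φ (ψ k)) * (ys' (φ (ψ k)))ᴴ) = fun k => Δseq (φ (ψ k)) :=
      funext fun k => heq _
    rw [heq2] at hFlim
    exact ⟨xL, yL, tendsto_nhds_unique hΔlim hFlim⟩
  have hScompact : IsCompact S := by
    apply Metric.isCompact_of_isClosed_isBounded hSclosed
    apply (Metric.isBounded_closedBall (x := (0 : Matrix (Fin n) (Fin n) ℂ)) (r := 1)).subset
    intro Δ hΔ
    rw [Metric.mem_closedBall, dist_zero_right, hΔ.2]
  -- the basic nonzero element
  set i0 : Fin n := ⟨0, hn⟩ with hi0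
  set j0 : Fin r := ⟨0, hr⟩ with hj0
  set x0 : Matrix (Fin n) (Fin r) ℂ := Matrix.single i0 j0 1 with hx0
  set E : Matrix (Fin n) (Fin n) ℂ := Matrix.single i0 i0 1 with hE
  have hct : x0ᴴ = Matrix.single j0 i0 1 := by
    ext a b
    simp [hx0, Matrix.conjTranspose_apply, Matrix.single, and_comm,
      apply_ite (star : ℂ → ℂ)]
  have hx0E : x0 * x0ᴴ = E := by
    ext a b
    rw [Matrix.mul_apply]
    simp only [hx0, hct, hE, Matrix.single, Matrix.of_apply]
    rw [Finset.sum_eq_single j0]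
    · by_cases h1 : i0 = a <;> by_cases h2 : i0 = b <;> simp [h1, h2]
    · intro c _ hc
      simp [Ne.symm hc]
    · simp
  have hEne : x0 * x0ᴴ ≠ (0 : Matrix (Fin n) (Fin r) ℂ) * (0 : Matrix (Fin n) (Fin r) ℂ)ᴴ := by
    rw [hx0E]
    intro hcon
    have := congrFun (congrFun hcon i0) i0
    simp [hE, Matrix.single] at this
  have hEnorm : ‖x0 * x0ᴴ - (0 : Matrix (Fin n) (Fin r) ℂ) * (0 : Matrix (Fin n) (Fin r) ℂ)ᴴ‖ = 1 := by
    rw [hx0E, Matrix.zero_mul, sub_zero, ← frob_eq_norm, frob]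
    have hEE : Eᴴ * E = E := by
      have h1 : Eᴴ = E := by
        ext a b
        simp only [Matrix.conjTranspose_apply, hE, Matrix.single, Matrix.of_apply,
          apply_ite (star : ℂ → ℂ), star_one, star_zero]
        by_cases h1 : i0 = a <;> by_cases h2 : i0 = b <;> simp [h1, h2]
      rw [h1]
      ext a b
      rw [Matrix.mul_apply]
      simp only [hE, Matrix.single, Matrix.of_apply]
      rw [Finset.sum_eq_single i0]
      · by_cases h1 : i0 = a <;> by_cases h2 : i0 = b <;> simp [h1, h2]
      · intro c _ hc
        simp [Ne.symm hc]
      · simp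
    rw [hEE, hE, Matrix.trace_single_eq_same]
    norm_num
  have hESmem : (x0 * x0ᴴ - (0 : Matrix (Fin n) (Fin r) ℂ) * (0 : Matrix (Fin n) (Fin r) ℂ)ᴴ) ∈ S :=
    ⟨⟨x0, 0, rfl⟩, hEnorm⟩
  -- minimum of fnum on S
  obtain ⟨Δm, hΔmS, hminOn⟩ := hScompact.exists_isMinOn ⟨_, hESmem⟩ hfc.continuousOn
  have hmin : ∀ Δ ∈ S, fnum Δm ≤ fnum Δ := fun Δ hΔ => hminOn hΔ
  -- positivity of the minimum
  have hcpos : 0 < fnum Δm := by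
    rcases (Finset.sum_nonneg fun j (_ : j ∈ Finset.univ) =>
      sq_nonneg (rinner Δm (A j))).lt_or_eq with h | h
    · exact h
    · exfalso
      have hzero : ∀ j, rinner Δm (A j) = 0 := by
        intro j
        have hj := (Finset.sum_eq_zero_iff_of_nonneg
          (fun j (_ : j ∈ Finset.univ) => sq_nonneg (rinner Δm (A j)))).mp h.symm j
          (Finset.mem_univ j)
        exact pow_eq_zero_iff (by norm_num) |>.mp hj
      obtain ⟨⟨x, y, hΔm⟩, hnm⟩ := hΔmS
      have heq : ∀ j, rinner (x * xᴴ) (A j) = rinner (y * yᴴ) (A j) := by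
        intro j
        have := hzero j
        rw [hΔm, rinner_sub_left'] at this
        linarith
      have hXY := hinj (x * xᴴ) (y * yᴴ)
        (Matrix.posSemidef_self_mul_conjTranspose x)
        (Matrix.posSemidef_self_mul_conjTranspose y)
        (by rw [Matrix.rank_self_mul_conjTranspose]; exact Matrix.rank_le_width x)
        (by rw [Matrix.rank_self_mul_conjTranspose]; exact Matrix.rank_le_width y)
        heq
      rw [hΔm, hXY, sub_self] at hnm
      rw [norm_zero] at hnm
      exact zero_ne_one hnm
  -- lower bound for all elements of the set
  have hlb : ∀ t ∈ {t : ℝ | ∃ x y : Matrix (Fin n) (Fin r) ℂ, x * xᴴ ≠ y * yᴴ ∧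
      t = (∑ j, rinner (x * xᴴ - y * yᴴ) (A j) ^ 2) / frob (x * xᴴ - y * yᴴ) ^ 2},
      fnum Δm ≤ t := by
    rintro t ⟨x, y, hne, rfl⟩
    set Δ : Matrix (Fin n) (Fin n) ℂ := x * xᴴ - y * yᴴ with hΔdef
    have hΔne : Δ ≠ 0 := sub_ne_zero_of_ne hne
    set s : ℝ := ‖Δ‖ with hs
    have hspos : 0 < s := norm_pos_iff.mpr hΔne
    set a : ℝ := Real.sqrt s⁻¹ with ha
    have ha2 : a * a = s⁻¹ := Real.mul_self_sqrt (inv_nonneg.mpr hspos.le)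
    set x' : Matrix (Fin n) (Fin r) ℂ := (a : ℂ) • x with hx'
    set y' : Matrix (Fin n) (Fin r) ℂ := (a : ℂ) • y with hy'
    have hsmul : ∀ u : Matrix (Fin n) (Fin r) ℂ,
        ((a : ℂ) • u) * ((a : ℂ) • u)ᴴ = ((s⁻¹ : ℝ) : ℂ) • (u * uᴴ) := by
      intro u
      rw [Matrix.conjTranspose_smul, Matrix.smul_mul, Matrix.mul_smul, smul_smul,
        RCLike.star_def, Complex.conj_ofReal, ← Complex.ofReal_mul, ha2]
    have hΔ' : x' * x'ᴴ - y' * y'ᴴ = ((s⁻¹ : ℝ) : ℂ) • Δ := by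
      rw [hx', hy', hsmul, hsmul, ← smul_sub, hΔdef]
    have hmemS : ((s⁻¹ : ℝ) : ℂ) • Δ ∈ S := by
      refine ⟨⟨x', y', hΔ'.symm⟩, ?_⟩
      rw [norm_smul, Complex.norm_real, Real.norm_eq_abs,
        abs_of_nonneg (inv_nonneg.mpr hspos.le), ← hs, inv_mul_cancel₀ hspos.ne']
    have hfnum' : fnum (((s⁻¹ : ℝ) : ℂ) • Δ) = (∑ j, rinner Δ (A j) ^ 2) / s ^ 2 := by
      rw [hfnum]
      simp only [rinner_real_smul']
      rw [eq_div_iff (by positivity)]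
      rw [Finset.sum_mul]
      refine Finset.sum_congr rfl fun j _ => ?_
      rw [mul_pow]
      field_simp
    have := hmin _ hmemS
    rw [hfnum'] at this
    rw [frob_eq_norm]
    exact this
  have hne : {t : ℝ | ∃ x y : Matrix (Fin n) (Fin r) ℂ, x * xᴴ ≠ y * yᴴ ∧
      t = (∑ j, rinner (x * xᴴ - y * yᴴ) (A j) ^ 2) / frob (x * xᴴ - y * yᴴ) ^ 2}.Nonempty :=
    ⟨_, ⟨x0, 0, hEne, rfl⟩⟩
  exact lt_of_lt_of_le hcpos (le_csInf hne hlb)
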